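/- arXiv:2306.06102 — 5 statements merged into one kernel-verified Lean document; each statement's English description precedes it below -/
import Mathlib

section
/- Under Assumptions 1 and 2, there exist positive real parameters δ, γ^1, …, γ^m, μ (with the open ball B_δ of radius δ about the origin contained in 𝕏 and 𝕏∖B_δ nonempty) such that, with K a matrix satisfying Assumption 2 for this δ, both of the following hold: (8) β := min_{x ∈ 𝕏∖B_δ} [1 − Σ_{i=1}^m γ^i ‖x‖ / max(μ, ‖x − p^i‖)] > 0, and (9) β·(L^0(x, Kx) + F^0(f(x, Kx)) − F^0(x)) ≤ −(1 − β)·P for all x ∈ 𝕏∖B_δ. -/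
noncomputable section

/-- A class-K function: continuous, strictly increasing on `[0,∞)`, vanishing at `0`. -/
def ClassK (σ : ℝ → ℝ) : Prop :=
  ContinuousOn σ (Set.Ici 0) ∧ StrictMonoOn σ (Set.Ici 0) ∧ σ 0 = 0

/-- Application of a matrix `K ∈ ℝ^{n_u × n_x}` to a state vector. -/
def matVec {nu nx : ℕ} (K : Matrix (Fin nu) (Fin nx) ℝ) (x : EuclideanSpace ℝ (Fin nx)) :
    EuclideanSpace ℝ (Fin nu) :=
  WithLp.toLp 2 (fun j => ∑ i, K j i * x i)

/-- Lemma 1: under Assumptions 1 and 2, there exist positive parameters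
`δ, γ^1,…,γ^m, μ` (with `B_δ ⊆ 𝕏` and `𝕏∖B_δ` nonempty) such that, with `K` a matrix
satisfying Assumption 2 for this `δ`, both
`β := min_{x∈𝕏∖B_δ} [1 − Σ_i γ^i‖x‖/max(μ,‖x−p^i‖)] > 0` and
`β·(L⁰(x,Kx)+F⁰(f(x,Kx))−F⁰(x)) ≤ −(1−β)·P` for all `x ∈ 𝕏∖B_δ` hold.
Here `P` is the min-max constant of the paper, characterized by `hP`. -/
theorem stmt_0 {nx nu m : ℕ}
    (f : EuclideanSpace ℝ (Fin nx) → EuclideanSpace ℝ (Fin nu) → EuclideanSpace ℝ (Fin nx))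
    (hf : Continuous fun q : EuclideanSpace ℝ (Fin nx) × EuclideanSpace ℝ (Fin nu) =>
      f q.1 q.2)
    (Xs : Set (EuclideanSpace ℝ (Fin nx))) (hXc : IsCompact Xs)
    (Us : Set (EuclideanSpace ℝ (Fin nu))) (hUc : IsCompact Us)
    (p : Fin (m + 1) → EuclideanSpace ℝ (Fin nx)) (hp0 : p 0 = 0)
    (L : Fin (m + 1) → EuclideanSpace ℝ (Fin nx) → EuclideanSpace ℝ (Fin nu) → ℝ)
    (F : Fin (m + 1) → EuclideanSpace ℝ (Fin nx) → ℝ)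
    -- Assumption 1
    (hLc : ∀ i, Continuous fun q :
      EuclideanSpace ℝ (Fin nx) × EuclideanSpace ℝ (Fin nu) => L i q.1 q.2)
    (hFc : ∀ i, Continuous (F i))
    (hLp : ∀ i, L i (p i) 0 = 0) (hFp : ∀ i, F i (p i) = 0)
    (σ1 σ2 : ℝ → ℝ) (hσ1 : ClassK σ1) (hσ2 : ClassK σ2)
    (hL_lb : ∀ i, ∀ x ∈ Xs, ∀ u ∈ Us, σ1 ‖x - p i‖ ≤ L i x u)
    (hF_lb : ∀ i, ∀ x ∈ Xs, σ1 ‖x - p i‖ ≤ F i x)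
    (hF_ub : ∀ i, ∀ x ∈ Xs, F i x ≤ σ2 ‖x - p i‖)
    -- Assumption 2
    (hA2 : ∀ δ > (0 : ℝ), Metric.ball (0 : EuclideanSpace ℝ (Fin nx)) δ ⊆ Xs →
      ∃ K : Matrix (Fin nu) (Fin nx) ℝ, ∀ x ∈ Xs \ Metric.ball 0 δ,
        L 0 x (matVec K x) + F 0 (f x (matVec K x)) - F 0 x < 0)
    -- there is some admissible radius (implicit in the paper's "pick any δ > 0 with B_δ ⊆ 𝕏")
    (hδ0 : ∃ δ0 > (0 : ℝ), Metric.ball (0 : EuclideanSpace ℝ (Fin nx)) δ0 ⊆ Xs ∧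
      (Xs \ Metric.ball 0 δ0).Nonempty)
    -- the constant P = min_{u∈𝕌} max_{i,x∈𝕏}[Lⁱ(x,u)+Fⁱ(f(x,u))−Fⁱ(x)]
    (P : ℝ)
    (hP : IsLeast {y : ℝ | ∃ u ∈ Us, IsGreatest
        ((fun q : Fin (m + 1) × EuclideanSpace ℝ (Fin nx) =>
            L q.1 q.2 u + F q.1 (f q.2 u) - F q.1 q.2) ''
          ((Set.univ : Set (Fin (m + 1))) ×ˢ Xs)) y} P) :
    ∃ δ : ℝ, 0 < δ ∧ Metric.ball (0 : EuclideanSpace ℝ (Fin nx)) δ ⊆ Xs ∧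
      (Xs \ Metric.ball 0 δ).Nonempty ∧
    ∃ K : Matrix (Fin nu) (Fin nx) ℝ,
      (∀ x ∈ Xs \ Metric.ball 0 δ,
        L 0 x (matVec K x) + F 0 (f x (matVec K x)) - F 0 x < 0) ∧
    ∃ γ : Fin m → ℝ, ∃ μ : ℝ, (∀ i, 0 < γ i) ∧ 0 < μ ∧
    ∃ β : ℝ,
      IsLeast ((fun x : EuclideanSpace ℝ (Fin nx) =>
        1 - ∑ i : Fin m, γ i * ‖x‖ / max μ ‖x - p i.succ‖) ''
          (Xs \ Metric.ball 0 δ)) β ∧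
      0 < β ∧
      ∀ x ∈ Xs \ Metric.ball 0 δ,
        β * (L 0 x (matVec K x) + F 0 (f x (matVec K x)) - F 0 x) ≤ -(1 - β) * P := by
  obtain ⟨δ, hδpos, hball, hne⟩ := hδ0
  obtain ⟨K, hK⟩ := hA2 δ hδpos hball
  refine ⟨δ, hδpos, hball, hne, K, hK, ?_⟩
  set S := Xs \ Metric.ball (0 : EuclideanSpace ℝ (Fin nx)) δ with hS
  have hScompact : IsCompact S := by
    rw [hS, Set.diff_eq]
    exact hXc.inter_right Metric.isOpen_ball.isClosed_compl
  -- continuity of matVec K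
  have hmv : Continuous (matVec K) := by
    apply (PiLp.continuous_toLp 2 _).comp
    apply continuous_pi
    intro j
    exact continuous_finset_sum _ fun i _ =>
      continuous_const.mul ((continuous_apply i).comp (PiLp.continuous_ofLp 2 _))
  -- continuity of v
  set v : EuclideanSpace ℝ (Fin nx) → ℝ :=
    fun x => L 0 x (matVec K x) + F 0 (f x (matVec K x)) - F 0 x with hv
  have hvc : Continuous v := by
    apply Continuous.sub
    · apply Continuous.add
      · exact (hLc 0).comp (continuous_id.prodMk hmv)
      · exact (hFc 0).comp ((hf).comp (continuous_id.prodMk hmv))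
    · exact hFc 0
  -- max of v on S
  obtain ⟨xM, hxM, hxMmax⟩ := hScompact.exists_isMaxOn hne hvc.continuousOn
  set M : ℝ := v xM with hM
  have hMneg : M < 0 := hK xM hxM
  -- norm bound on S
  obtain ⟨C, hC⟩ := (hXc.isBounded.subset (Set.diff_subset)).exists_norm_le
  set R : ℝ := max C 1 with hR
  have hRpos : (0 : ℝ) < R := lt_of_lt_of_le one_pos (le_max_right _ _)
  have hRle : ∀ x ∈ S, ‖x‖ ≤ R := fun x hx => le_trans (hC x hx) (le_max_left _ _)
  -- threshold θ
  set θ : ℝ := if 0 < P then P / (P - M) else 0 with hθ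
  have hθ0 : 0 ≤ θ := by
    rw [hθ]; split_ifs with h
    · exact div_nonneg h.le (by linarith)
    · exact le_refl 0
  have hθ1 : θ < 1 := by
    rw [hθ]; split_ifs with h
    · rw [div_lt_one (by linarith)]; linarith
    · exact one_pos
  set t : ℝ := (1 + θ) / 2 with ht
  have htpos : 0 < t := by rw [ht]; linarith
  have htθ : θ ≤ t := by rw [ht]; linarith
  have ht1 : t < 1 := by rw [ht]; linarith
  set ε : ℝ := (1 - t) / ((m : ℝ) * R + 1) with hε
  have hden : (0 : ℝ) < (m : ℝ) * R + 1 := by positivity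
  have hεpos : 0 < ε := div_pos (by linarith) hden
  refine ⟨fun _ => ε, 1, fun _ => hεpos, one_pos, ?_⟩
  set g : EuclideanSpace ℝ (Fin nx) → ℝ :=
    fun x => 1 - ∑ i : Fin m, ε * ‖x‖ / max 1 ‖x - p i.succ‖ with hg
  have hgc : Continuous g := by
    apply continuous_const.sub
    apply continuous_finset_sum
    intro i _
    apply Continuous.div
    · exact continuous_const.mul continuous_norm
    · exact continuous_const.max ((continuous_id.sub continuous_const).norm)
    · intro x
      have : (1 : ℝ) ≤ max 1 ‖x - p i.succ‖ := le_max_left _ _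
      linarith
  -- lower bound g ≥ t on S
  have hglb : ∀ x ∈ S, t ≤ g x := by
    intro x hx
    have hsum : ∑ i : Fin m, ε * ‖x‖ / max 1 ‖x - p i.succ‖ ≤ (m : ℝ) * (ε * R) := by
      calc ∑ i : Fin m, ε * ‖x‖ / max 1 ‖x - p i.succ‖
          ≤ ∑ _i : Fin m, ε * R := by
            apply Finset.sum_le_sum
            intro i _
            have h1 : (1 : ℝ) ≤ max 1 ‖x - p i.succ‖ := le_max_left _ _
            have h2 : ε * ‖x‖ / max 1 ‖x - p i.succ‖ ≤ ε * ‖x‖ := by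
              apply div_le_self (by positivity) h1
            exact h2.trans (mul_le_mul_of_nonneg_left (hRle x hx) hεpos.le)
        _ = (m : ℝ) * (ε * R) := by simp [Finset.sum_const, Finset.card_fin]
    have hεR : (m : ℝ) * (ε * R) ≤ 1 - t := by
      have : (m : ℝ) * (ε * R) = (1 - t) * ((m : ℝ) * R) / ((m : ℝ) * R + 1) := by
        rw [hε]; field_simp
      rw [this]
      rw [div_le_iff₀ hden]
      have hmR : (0 : ℝ) ≤ (m : ℝ) * R := by positivity
      nlinarith
    rw [hg]; dsimp only; linarith
  -- upper bound g ≤ 1 on S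
  have hgub : ∀ x ∈ S, g x ≤ 1 := by
    intro x hx
    have hsum : (0 : ℝ) ≤ ∑ i : Fin m, ε * ‖x‖ / max 1 ‖x - p i.succ‖ := by
      apply Finset.sum_nonneg
      intro i _
      apply div_nonneg (by positivity)
      exact le_trans zero_le_one (le_max_left _ _)
    rw [hg]; dsimp only; linarith
  -- min of g on S
  obtain ⟨x0, hx0, hx0min⟩ := hScompact.exists_isMinOn hne hgc.continuousOn
  refine ⟨g x0, ⟨⟨x0, hx0, rfl⟩, ?_⟩, ?_, ?_⟩
  · rintro y ⟨x, hx, rfl⟩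
    exact hx0min hx
  · exact lt_of_lt_of_le htpos (hglb x0 hx0)
  · intro x hx
    set β : ℝ := g x0 with hβ
    have hβt : t ≤ β := hglb x0 hx0
    have hβ1 : β ≤ 1 := hgub x0 hx0
    have hβpos : 0 < β := lt_of_lt_of_le htpos hβt
    have hvle : v x ≤ M := hxMmax hx
    have hβv : β * v x ≤ β * M := mul_le_mul_of_nonneg_left hvle hβpos.le
    by_cases hPpos : 0 < P
    · have hθval : θ = P / (P - M) := by rw [hθ, if_pos hPpos]
      have hPM : 0 < P - M := by linarith
      have hβθ : P / (P - M) ≤ β := by rw [← hθval]; linarith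
      have : P ≤ β * (P - M) := by
        rw [div_le_iff₀ hPM] at hβθ; linarith
      show β * v x ≤ -(1 - β) * P
      nlinarith
    · push_neg at hPpos
      have hMle : M ≤ 0 := hMneg.le
      have h1 : β * v x ≤ 0 :=
        hβv.trans (mul_nonpos_iff.mpr (Or.inl ⟨hβpos.le, hMle⟩))
      have h2 : (0 : ℝ) ≤ (1 - β) * (-P) := mul_nonneg (by linarith) (by linarith)
      have h3 : -(1 - β) * P = (1 - β) * (-P) := by ring
      show β * v x ≤ -(1 - β) * P
      linarith
end
end

section
/- Suppose P > 0. Fix δ > 0 with B_δ ⊆ 𝕏 and 𝕏∖B_δ nonempty, let K be a matrix satisfying Assumption 2 for this δ, and set k_1 := max_{x ∈ 𝕏∖B_δ} [L^0(x, Kx) + F^0(f(x, Kx)) − F^0(x)] (so k_1 < 0) and z := max_{x ∈ 𝕏∖B_δ} ‖x‖ (so z > 0). If the positive parameters γ^1, …, γ^m, μ satisfy (Σ_{i=1}^m γ^i)/μ ≤ (1 − P/(P − k_1))/z, then β := min_{x ∈ 𝕏∖B_δ} [1 − Σ_{i=1}^m γ^i ‖x‖ / max(μ, ‖x − p^i‖)]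 satisfies β ≥ P/(P − k_1) > 0, and β·(L^0(x, Kx) + F^0(f(x, Kx)) − F^0(x)) ≤ −(1 − β)·P for all x ∈ 𝕏∖B_δ. -/
noncomputable section

/-- suppose `P > 0`, fix `δ > 0` with `B_δ ⊆ 𝕏` and `𝕏∖B_δ` nonempty, let `K`
satisfy Assumption 2 for `δ`, and set `k_1 := max_{x∈𝕏∖B_δ}[L⁰(x,Kx)+F⁰(f(x,Kx))−F⁰(x)]`
and `z := max_{x∈𝕏∖B_δ} ‖x‖`.  If the positive `γ^i, μ` satisfy
`(Σ γ^i)/μ ≤ (1 − P/(P−k_1))/z`, then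
`β := min_{x∈𝕏∖B_δ}[1 − Σ_i γ^i‖x‖/max(μ,‖x−p^i‖)]` satisfies `β ≥ P/(P−k_1) > 0` and
`β·(L⁰(x,Kx)+F⁰(f(x,Kx))−F⁰(x)) ≤ −(1−β)·P` for all `x ∈ 𝕏∖B_δ`. -/
theorem stmt_1 {nx nu m : ℕ}
    (f : EuclideanSpace ℝ (Fin nx) → EuclideanSpace ℝ (Fin nu) → EuclideanSpace ℝ (Fin nx))
    (hf : Continuous fun q : EuclideanSpace ℝ (Fin nx) × EuclideanSpace ℝ (Fin nu) =>
      f q.1 q.2)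
    (Xs : Set (EuclideanSpace ℝ (Fin nx))) (hXc : IsCompact Xs)
    (Us : Set (EuclideanSpace ℝ (Fin nu))) (hUc : IsCompact Us)
    (p : Fin (m + 1) → EuclideanSpace ℝ (Fin nx)) (hp0 : p 0 = 0)
    (L : Fin (m + 1) → EuclideanSpace ℝ (Fin nx) → EuclideanSpace ℝ (Fin nu) → ℝ)
    (F : Fin (m + 1) → EuclideanSpace ℝ (Fin nx) → ℝ)
    -- Assumption 1
    (hLc : ∀ i, Continuous fun q :
      EuclideanSpace ℝ (Fin nx) × EuclideanSpace ℝ (Fin nu) => L i q.1 q.2)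
    (hFc : ∀ i, Continuous (F i))
    (hLp : ∀ i, L i (p i) 0 = 0) (hFp : ∀ i, F i (p i) = 0)
    (σ1 σ2 : ℝ → ℝ) (hσ1 : ClassK σ1) (hσ2 : ClassK σ2)
    (hL_lb : ∀ i, ∀ x ∈ Xs, ∀ u ∈ Us, σ1 ‖x - p i‖ ≤ L i x u)
    (hF_lb : ∀ i, ∀ x ∈ Xs, σ1 ‖x - p i‖ ≤ F i x)
    (hF_ub : ∀ i, ∀ x ∈ Xs, F i x ≤ σ2 ‖x - p i‖)
    -- the constant P = min_{u∈𝕌} max_{i,x∈𝕏}[Lⁱ(x,u)+Fⁱ(f(x,u))−Fⁱ(x)], with P > 0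
    (P : ℝ)
    (hP : IsLeast {y : ℝ | ∃ u ∈ Us, IsGreatest
        ((fun q : Fin (m + 1) × EuclideanSpace ℝ (Fin nx) =>
            L q.1 q.2 u + F q.1 (f q.2 u) - F q.1 q.2) ''
          ((Set.univ : Set (Fin (m + 1))) ×ˢ Xs)) y} P)
    (hPpos : 0 < P)
    -- δ and K
    (δ : ℝ) (hδ : 0 < δ)
    (hball : Metric.ball (0 : EuclideanSpace ℝ (Fin nx)) δ ⊆ Xs)
    (hne : (Xs \ Metric.ball 0 δ).Nonempty)
    (K : Matrix (Fin nu) (Fin nx) ℝ)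
    (hK : ∀ x ∈ Xs \ Metric.ball 0 δ,
      L 0 x (matVec K x) + F 0 (f x (matVec K x)) - F 0 x < 0)
    -- k₁ and z
    (k1 : ℝ)
    (hk1 : IsGreatest ((fun x : EuclideanSpace ℝ (Fin nx) =>
      L 0 x (matVec K x) + F 0 (f x (matVec K x)) - F 0 x) '' (Xs \ Metric.ball 0 δ)) k1)
    (z : ℝ)
    (hz : IsGreatest ((fun x : EuclideanSpace ℝ (Fin nx) => ‖x‖) ''
      (Xs \ Metric.ball 0 δ)) z)
    -- the parameters
    (γ : Fin m → ℝ) (hγ : ∀ i, 0 < γ i) (μ : ℝ) (hμ : 0 < μ)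
    (hrat : (∑ i, γ i) / μ ≤ (1 - P / (P - k1)) / z) :
    ∃ β : ℝ,
      IsLeast ((fun x : EuclideanSpace ℝ (Fin nx) =>
        1 - ∑ i : Fin m, γ i * ‖x‖ / max μ ‖x - p i.succ‖) ''
          (Xs \ Metric.ball 0 δ)) β ∧
      P / (P - k1) ≤ β ∧ 0 < P / (P - k1) ∧
      ∀ x ∈ Xs \ Metric.ball 0 δ,
        β * (L 0 x (matVec K x) + F 0 (f x (matVec K x)) - F 0 x) ≤ -(1 - β) * P := by
  classical
  set D := Xs \ Metric.ball (0 : EuclideanSpace ℝ (Fin nx)) δ with hD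
  have hDc : IsCompact D := hXc.diff Metric.isOpen_ball
  set g : EuclideanSpace ℝ (Fin nx) → ℝ :=
    fun x => 1 - ∑ i : Fin m, γ i * ‖x‖ / max μ ‖x - p i.succ‖ with hg
  have hgc : Continuous g := by
    apply continuous_const.sub
    apply continuous_finset_sum
    intro i _
    exact ((continuous_const.mul continuous_norm).div
      (continuous_const.max ((continuous_id.sub continuous_const).norm))
      (fun x => ne_of_gt (lt_max_of_lt_left hμ)))
  obtain ⟨x0, hx0, hmin⟩ := hDc.exists_isMinOn hne hgc.continuousOn
  -- k1 < 0
  obtain ⟨xk, hxk, hxkval⟩ := hk1.1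
  have hk1neg : k1 < 0 := hxkval ▸ hK xk hxk
  have hPk1 : 0 < P - k1 := by linarith
  have hrpos : 0 < P / (P - k1) := div_pos hPpos hPk1
  -- z ≥ δ > 0
  obtain ⟨xz, hxz⟩ := hne
  have hδz : δ ≤ ‖xz‖ := by
    have := hxz.2
    simp [Metric.mem_ball, dist_zero_right] at this
    exact this
  have hzpos : 0 < z := lt_of_lt_of_le hδ (le_trans hδz (hz.2 ⟨xz, hxz, rfl⟩))
  -- lower bound on g on D
  have hglb : ∀ x ∈ D, P / (P - k1) ≤ g x := by
    intro x hx
    have hxz' : ‖x‖ ≤ z := hz.2 ⟨x, hx, rfl⟩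
    have hxnn : (0:ℝ) ≤ ‖x‖ := norm_nonneg _
    have hsum : (∑ i : Fin m, γ i * ‖x‖ / max μ ‖x - p i.succ‖)
        ≤ ∑ i : Fin m, γ i * z / μ := by
      apply Finset.sum_le_sum
      intro i _
      apply div_le_div₀ (mul_nonneg (hγ i).le hzpos.le)
        (mul_le_mul_of_nonneg_left hxz' (hγ i).le) hμ (le_max_left _ _)
    have hsum2 : (∑ i : Fin m, γ i * z / μ) = z * ((∑ i, γ i) / μ) := by
      rw [Finset.sum_div]
      rw [Finset.mul_sum]
      congr 1; funext i; ring
    have h3 : z * ((∑ i, γ i) / μ) ≤ z * ((1 - P / (P - k1)) / z) :=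
      mul_le_mul_of_nonneg_left hrat hzpos.le
    have h4 : z * ((1 - P / (P - k1)) / z) = 1 - P / (P - k1) := by
      rw [mul_comm, div_mul_cancel₀ _ (ne_of_gt hzpos)]
    have : (∑ i : Fin m, γ i * ‖x‖ / max μ ‖x - p i.succ‖) ≤ 1 - P / (P - k1) := by
      calc _ ≤ ∑ i : Fin m, γ i * z / μ := hsum
        _ = z * ((∑ i, γ i) / μ) := hsum2
        _ ≤ z * ((1 - P / (P - k1)) / z) := h3
        _ = 1 - P / (P - k1) := h4
    simp only [hg]
    linarith
  refine ⟨g x0, ⟨⟨x0, hx0, rfl⟩, ?_⟩, hglb x0 hx0, hrpos, ?_⟩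
  · rintro y ⟨x, hx, rfl⟩
    exact hmin hx
  · intro x hx
    have hβr : P / (P - k1) ≤ g x0 := hglb x0 hx0
    have hβpos : 0 < g x0 := lt_of_lt_of_le hrpos hβr
    have hxk1 : L 0 x (matVec K x) + F 0 (f x (matVec K x)) - F 0 x ≤ k1 :=
      hk1.2 ⟨x, hx, rfl⟩
    have h1 : g x0 * (L 0 x (matVec K x) + F 0 (f x (matVec K x)) - F 0 x)
        ≤ g x0 * k1 := mul_le_mul_of_nonneg_left hxk1 hβpos.le
    have h2 : P ≤ g x0 * (P - k1) := (div_le_iff₀ hPk1).mp hβr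
    nlinarith
end
end

section
/- (Theorem 1) Let Assumptions 1 and 2 hold and suppose P > 0. Let the positive parameters δ, γ^1,…,γ^m, μ satisfy β := min_{x ∈ 𝕏∖B_δ} α_b^0(x) > 0 and β·(L^0(x, Kx) + F^0(f(x, Kx)) − F^0(x)) ≤ −(1 − β)·P for all x ∈ 𝕏∖B_δ, where K satisfies Assumption 2 for δ. Fix the horizon N ≥ 2, let x_k ∈ 𝕏∖B_δ, set the weight vector α := α_b(x_k), and let U_* be a feasible multi-horizon input at x_k that minimizes α⊤𝐉(x_k, ·) over all feasible multi-horizon inputs, whose primary final state x_{k,f} lies in 𝕏∖B_δ. Let u*_k be the first input of U_*, x_{k+1} := f(x_k, u*_k), and let U_s(x_{k+1}) be the shifted candidate built from U_* with K and û. Then α⊤𝐉(x_{k+1}, U_s(x_{k+1})) ≤ α⊤𝐉(x_k, U_*). -/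
noncomputable section

/-- The state trajectory of `x_{j+1} = f(x_j, u_j)` from `x` under input sequence `u`. -/
def traj {E U : Type*} (f : E → U → E) (x : E) (u : ℕ → U) : ℕ → E
  | 0 => x
  | j + 1 => f (traj f x u j) (u j)

/-- Horizon-`N` cost `Jⁱ(x,(v_j)) = Σ_{j<N} L(x_j,v_j) + F(x_N)` of an input sequence. -/
def Jcost {E U : Type*} (f : E → U → E) (L : E → U → ℝ) (F : E → ℝ) (N : ℕ)
    (x : E) (v : ℕ → U) : ℝ :=
  (∑ j ∈ Finset.range N, L (traj f x v j) (v j)) + F (traj f x v N)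

/-- Weighted multi-horizon cost `α⊤𝐉(x,U)`: component `0` is `J⁰(x,U⁰)`, component `i ≥ 1`
is the average `(1/(N−1)) Σ_{p=0}^{N−2} Jⁱ(x,U_pⁱ)`.  `Up` is the primary horizon, and
`Ua i p` is the sub-horizon `U_pⁱ` toward alternative destination `i+1`. -/
def wcost {E U : Type*} {m : ℕ} (f : E → U → E) (L : Fin (m + 1) → E → U → ℝ)
    (F : Fin (m + 1) → E → ℝ) (N : ℕ) (α : Fin (m + 1) → ℝ)
    (x : E) (Up : ℕ → U) (Ua : Fin m → ℕ → ℕ → U) : ℝ :=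
  α 0 * Jcost f (L 0) (F 0) N x Up +
    ∑ i : Fin m, α i.succ *
      (((N : ℝ) - 1)⁻¹ *
        ∑ p ∈ Finset.range (N - 1), Jcost f (L i.succ) (F i.succ) N x (Ua i p))

/-- Feasibility of a multi-horizon input at `x`: all inputs lie in `𝕌`, all trajectory
states lie in `𝕏`, and each sub-horizon `U_pⁱ` shares its first `p+1` inputs with `U⁰`. -/
def Feas {E U : Type*} {m : ℕ} (f : E → U → E) (Xs : Set E) (Us : Set U) (N : ℕ)
    (x : E) (Up : ℕ → U) (Ua : Fin m → ℕ → ℕ → U) : Prop :=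
  (∀ j < N, Up j ∈ Us) ∧ (∀ j ≤ N, traj f x Up j ∈ Xs) ∧
  (∀ i : Fin m, ∀ p < N - 1,
    (∀ j < N, Ua i p j ∈ Us) ∧ (∀ j ≤ N, traj f x (Ua i p) j ∈ Xs)) ∧
  (∀ i : Fin m, ∀ p < N - 1, ∀ j ≤ p, Ua i p j = Up j)

/-- `U_*` is a feasible multi-horizon input minimizing `α⊤𝐉(x,·)` over feasible inputs. -/
def IsMinimizer {E U : Type*} {m : ℕ} (f : E → U → E) (L : Fin (m + 1) → E → U → ℝ)
    (F : Fin (m + 1) → E → ℝ) (Xs : Set E) (Us : Set U) (N : ℕ) (α : Fin (m + 1) → ℝ)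
    (x : E) (Up : ℕ → U) (Ua : Fin m → ℕ → ℕ → U) : Prop :=
  Feas f Xs Us N x Up Ua ∧
    ∀ Vp Va, Feas f Xs Us N x Vp Va →
      wcost f L F N α x Up Ua ≤ wcost f L F N α x Vp Va

/-- Shift of a horizon: drop the first input and append `last` at the end. -/
def shiftP {U : Type*} (N : ℕ) (Up : ℕ → U) (last : U) : ℕ → U :=
  fun j => if j < N - 1 then Up (j + 1) else last

/-- Shift of all alternative sub-horizons: drop their first input and append `uhat`. -/
def shiftA {U : Type*} {m : ℕ} (N : ℕ) (Ua : Fin m → ℕ → ℕ → U) (uhat : U) :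
    Fin m → ℕ → ℕ → U :=
  fun i p j => if j < N - 1 then Ua i p (j + 1) else uhat

/-- The baseline weight vector `α_b(x)`: `α_b⁰(x) = 1 − Σ_i γ^i‖x‖/max(μ,‖x−pⁱ‖)` and
`α_bⁱ(x) = γ^i‖x‖/max(μ,‖x−pⁱ‖)` for `i = 1,…,m`. -/
def baseWeight {nx m : ℕ} (γ : Fin m → ℝ) (μ : ℝ)
    (p : Fin (m + 1) → EuclideanSpace ℝ (Fin nx)) (x : EuclideanSpace ℝ (Fin nx)) :
    Fin (m + 1) → ℝ :=
  Fin.cons (1 - ∑ i : Fin m, γ i * ‖x‖ / max μ ‖x - p i.succ‖)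
    (fun i => γ i * ‖x‖ / max μ ‖x - p i.succ‖)
section ShiftAux

variable {E U : Type*} (f : E → U → E)

lemma traj_shiftP (N : ℕ) (x : E) (v : ℕ → U) (last : U) :
    ∀ j, j ≤ N - 1 → traj f (f x (v 0)) (shiftP N v last) j = traj f x v (j + 1) := by
  intro j
  induction j with
  | zero => intro _; simp [traj]
  | succ j ih =>
    intro hj
    have hj' : j < N - 1 := lt_of_lt_of_le (Nat.lt_succ_self j) hj
    have h1 : traj f (f x (v 0)) (shiftP N v last) (j + 1)
        = f (traj f (f x (v 0)) (shiftP N v last) j) (shiftP N v last j) := rfl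
    rw [h1, ih (le_of_lt hj')]
    have h2 : shiftP N v last j = v (j + 1) := if_pos hj'
    rw [h2]
    rfl

lemma Jcost_shiftP (L : E → U → ℝ) (F : E → ℝ) (n : ℕ) (x : E) (v : ℕ → U) (last : U) :
    Jcost f L F (n + 1) (f x (v 0)) (shiftP (n + 1) v last)
      = Jcost f L F (n + 1) x v - L x (v 0)
        + (L (traj f x v (n + 1)) last + F (f (traj f x v (n + 1)) last)
           - F (traj f x v (n + 1))) := by
  have hT : ∀ j ≤ n, traj f (f x (v 0)) (shiftP (n + 1) v last) j = traj f x v (j + 1) := by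
    intro j hj
    exact traj_shiftP f (n + 1) x v last j (by omega)
  have hlast : shiftP (n + 1) v last n = last := by
    simp [shiftP]
  have hfin : traj f (f x (v 0)) (shiftP (n + 1) v last) (n + 1)
      = f (traj f x v (n + 1)) last := by
    have h1 : traj f (f x (v 0)) (shiftP (n + 1) v last) (n + 1)
        = f (traj f (f x (v 0)) (shiftP (n + 1) v last) n)
            (shiftP (n + 1) v last n) := rfl
    rw [h1, hT n le_rfl, hlast]
  unfold Jcost
  rw [hfin, Finset.sum_range_succ, hT n le_rfl, hlast,
    Finset.sum_range_succ' (fun j => L (traj f x v j) (v j)) n]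
  have hS : ∀ j ∈ Finset.range n,
      L (traj f (f x (v 0)) (shiftP (n + 1) v last) j) (shiftP (n + 1) v last j)
        = L (traj f x v (j + 1)) (v (j + 1)) := by
    intro j hj
    have hj' := Finset.mem_range.mp hj
    rw [hT j (le_of_lt hj')]
    have : shiftP (n + 1) v last j = v (j + 1) := if_pos (by omega)
    rw [this]
  rw [Finset.sum_congr rfl hS]
  have h0 : traj f x v 0 = x := rfl
  rw [h0]
  ring

end ShiftAux

lemma classK_nonneg {σ : ℝ → ℝ} (h : ClassK σ) {t : ℝ} (ht : 0 ≤ t) : 0 ≤ σ t := by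
  have := h.2.1.monotoneOn (Set.mem_Ici.mpr le_rfl) (Set.mem_Ici.mpr ht) ht
  linarith [h.2.2]

/-- Theorem 1: under Assumptions 1 and 2 with `P > 0`, with parameters
`δ, γ, μ` satisfying `β := min_{x∈𝕏∖B_δ} α_b⁰(x) > 0` and
`β·(L⁰(x,Kx)+F⁰(f(x,Kx))−F⁰(x)) ≤ −(1−β)·P` on `𝕏∖B_δ` (`K` from Assumption 2 for `δ`),
for `x_k ∈ 𝕏∖B_δ`, `α := α_b(x_k)`, and `U_*` a feasible minimizer of `α⊤𝐉(x_k,·)` whose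
primary final state lies in `𝕏∖B_δ`, the shifted candidate `U_s(x_{k+1})` built with `K`
and `û` satisfies `α⊤𝐉(x_{k+1}, U_s(x_{k+1})) ≤ α⊤𝐉(x_k, U_*)`, where
`x_{k+1} = f(x_k, u*_k)`. -/
theorem stmt_6 {nx nu m : ℕ}
    (f : EuclideanSpace ℝ (Fin nx) → EuclideanSpace ℝ (Fin nu) → EuclideanSpace ℝ (Fin nx))
    (hf : Continuous fun q : EuclideanSpace ℝ (Fin nx) × EuclideanSpace ℝ (Fin nu) =>
      f q.1 q.2)
    (Xs : Set (EuclideanSpace ℝ (Fin nx))) (hXc : IsCompact Xs)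
    (Us : Set (EuclideanSpace ℝ (Fin nu))) (hUc : IsCompact Us)
    (p : Fin (m + 1) → EuclideanSpace ℝ (Fin nx)) (hp0 : p 0 = 0)
    (L : Fin (m + 1) → EuclideanSpace ℝ (Fin nx) → EuclideanSpace ℝ (Fin nu) → ℝ)
    (F : Fin (m + 1) → EuclideanSpace ℝ (Fin nx) → ℝ)
    -- Assumption 1
    (hLc : ∀ i, Continuous fun q :
      EuclideanSpace ℝ (Fin nx) × EuclideanSpace ℝ (Fin nu) => L i q.1 q.2)
    (hFc : ∀ i, Continuous (F i))
    (hLp : ∀ i, L i (p i) 0 = 0) (hFp : ∀ i, F i (p i) = 0)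
    (σ1 σ2 : ℝ → ℝ) (hσ1 : ClassK σ1) (hσ2 : ClassK σ2)
    (hL_lb : ∀ i, ∀ x ∈ Xs, ∀ u ∈ Us, σ1 ‖x - p i‖ ≤ L i x u)
    (hF_lb : ∀ i, ∀ x ∈ Xs, σ1 ‖x - p i‖ ≤ F i x)
    (hF_ub : ∀ i, ∀ x ∈ Xs, F i x ≤ σ2 ‖x - p i‖)
    -- Assumption 2 (global form)
    (hA2 : ∀ δ' > (0 : ℝ), Metric.ball (0 : EuclideanSpace ℝ (Fin nx)) δ' ⊆ Xs →
      ∃ K' : Matrix (Fin nu) (Fin nx) ℝ, ∀ x ∈ Xs \ Metric.ball 0 δ',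
        L 0 x (matVec K' x) + F 0 (f x (matVec K' x)) - F 0 x < 0)
    -- P = min-max constant, attained at û, with P > 0
    (P : ℝ) (uhat : EuclideanSpace ℝ (Fin nu))
    (hP : IsLeast {y : ℝ | ∃ u ∈ Us, IsGreatest
        ((fun q : Fin (m + 1) × EuclideanSpace ℝ (Fin nx) =>
            L q.1 q.2 u + F q.1 (f q.2 u) - F q.1 q.2) ''
          ((Set.univ : Set (Fin (m + 1))) ×ˢ Xs)) y} P)
    (huhat : uhat ∈ Us ∧ IsGreatest
        ((fun q : Fin (m + 1) × EuclideanSpace ℝ (Fin nx) =>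
            L q.1 q.2 uhat + F q.1 (f q.2 uhat) - F q.1 q.2) ''
          ((Set.univ : Set (Fin (m + 1))) ×ˢ Xs)) P)
    (hPpos : 0 < P)
    -- parameters δ, γ, μ and the matrix K satisfying Assumption 2 for δ
    (δ : ℝ) (hδ : 0 < δ) (γ : Fin m → ℝ) (hγ : ∀ i, 0 < γ i) (μ : ℝ) (hμ : 0 < μ)
    (hball : Metric.ball (0 : EuclideanSpace ℝ (Fin nx)) δ ⊆ Xs)
    (K : Matrix (Fin nu) (Fin nx) ℝ)
    (hK : ∀ x ∈ Xs \ Metric.ball 0 δ,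
      L 0 x (matVec K x) + F 0 (f x (matVec K x)) - F 0 x < 0)
    -- β = min of the primary baseline weight over 𝕏∖B_δ, β > 0, and the key inequality
    (β : ℝ)
    (hβ : IsLeast ((fun x => baseWeight γ μ p x 0) '' (Xs \ Metric.ball 0 δ)) β)
    (hβpos : 0 < β)
    (hkey : ∀ x ∈ Xs \ Metric.ball 0 δ,
      β * (L 0 x (matVec K x) + F 0 (f x (matVec K x)) - F 0 x) ≤ -(1 - β) * P)
    -- horizon, current state, and the optimizer U_*
    (N : ℕ) (hN : 2 ≤ N)
    (xk : EuclideanSpace ℝ (Fin nx)) (hxk : xk ∈ Xs \ Metric.ball 0 δ)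
    (Up : ℕ → EuclideanSpace ℝ (Fin nu))
    (Ua : Fin m → ℕ → ℕ → EuclideanSpace ℝ (Fin nu))
    (hopt : IsMinimizer f L F Xs Us N (baseWeight γ μ p xk) xk Up Ua)
    (hxkf : traj f xk Up N ∈ Xs \ Metric.ball 0 δ) :
    wcost f L F N (baseWeight γ μ p xk) (f xk (Up 0))
        (shiftP N Up (matVec K (traj f xk Up N))) (shiftA N Ua uhat)
      ≤ wcost f L F N (baseWeight γ μ p xk) xk Up Ua := by
  obtain ⟨n, rfl⟩ : ∃ n, N = n + 2 := ⟨N - 2, by omega⟩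
  set α := baseWeight γ μ p xk with hα
  set xf := traj f xk Up (n + 2) with hxf
  set T0 := L 0 xf (matVec K xf) + F 0 (f xf (matVec K xf)) - F 0 xf with hT0
  obtain ⟨⟨hUpU, hUpX, haltF, hshare⟩, -⟩ := hopt
  have hxkX : xk ∈ Xs := hxk.1
  have hUp0U : Up 0 ∈ Us := hUpU 0 (by omega)
  -- weights
  have hA0 : β ≤ α 0 := hβ.2 ⟨xk, hxk, rfl⟩
  have hAi : ∀ i : Fin m, 0 ≤ α i.succ := by
    intro i
    have : α i.succ = γ i * ‖xk‖ / max μ ‖xk - p i.succ‖ := by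
      simp [hα, baseWeight]
    rw [this]
    exact div_nonneg (mul_nonneg (hγ i).le (norm_nonneg _))
      (le_trans hμ.le (le_max_left _ _))
  have hsumA : ∑ i : Fin m, α i.succ = 1 - α 0 := by
    simp only [hα, baseWeight, Fin.cons_succ, Fin.cons_zero]
    ring
  -- nonnegativity of stage costs at xk
  have hLnn : ∀ (i : Fin (m + 1)) (u : EuclideanSpace ℝ (Fin nu)), u ∈ Us →
      0 ≤ L i xk u := fun i u hu =>
    le_trans (classK_nonneg hσ1 (norm_nonneg _)) (hL_lb i xk hxkX u hu)
  -- the primary decrease term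
  have hT0neg : T0 ≤ 0 := (hK xf hxkf).le
  have hβkey : β * T0 ≤ -(1 - β) * P := hkey xf hxkf
  -- primary cost bound
  have hprim : Jcost f (L 0) (F 0) (n + 2) (f xk (Up 0))
      (shiftP (n + 2) Up (matVec K xf))
      ≤ Jcost f (L 0) (F 0) (n + 2) xk Up + T0 := by
    have := Jcost_shiftP f (L 0) (F 0) (n + 1) xk Up (matVec K xf)
    have h0 := hLnn 0 (Up 0) hUp0U
    rw [show n + 1 + 1 = n + 2 from rfl] at this
    rw [this, ← hxf, ← hT0]
    linarith
  -- alternative cost bounds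
  have halt : ∀ i : Fin m, ∀ q ∈ Finset.range (n + 1),
      Jcost f (L i.succ) (F i.succ) (n + 2) (f xk (Up 0)) (shiftA (n + 2) Ua uhat i q)
        ≤ Jcost f (L i.succ) (F i.succ) (n + 2) xk (Ua i q) + P := by
    intro i q hq
    have hq' : q < n + 2 - 1 := by
      have := Finset.mem_range.mp hq; omega
    have h0eq : Ua i q 0 = Up 0 := hshare i q hq' 0 (Nat.zero_le q)
    have hA : shiftA (n + 2) Ua uhat i q = shiftP (n + 2) (Ua i q) uhat := rfl
    have hxifX : traj f xk (Ua i q) (n + 2) ∈ Xs :=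
      (haltF i q hq').2 (n + 2) le_rfl
    have hTip : L i.succ (traj f xk (Ua i q) (n + 2)) uhat
        + F i.succ (f (traj f xk (Ua i q) (n + 2)) uhat)
        - F i.succ (traj f xk (Ua i q) (n + 2)) ≤ P :=
      huhat.2.2 ⟨(i.succ, traj f xk (Ua i q) (n + 2)),
        ⟨Set.mem_univ _, hxifX⟩, rfl⟩
    have hUa0U : Ua i q 0 ∈ Us := ((haltF i q hq').1) 0 (by omega)
    have hLnn' := hLnn i.succ (Ua i q 0) hUa0U
    have heq := Jcost_shiftP f (L i.succ) (F i.succ) (n + 1) xk (Ua i q) uhat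
    rw [show n + 1 + 1 = n + 2 from rfl] at heq
    rw [hA, ← h0eq, heq]
    linarith
  -- assemble
  unfold wcost
  have hc : ((↑(n + 2) : ℝ) - 1) = (n : ℝ) + 1 := by push_cast; ring
  have hcpos : (0 : ℝ) < (n : ℝ) + 1 := by positivity
  have hrange : n + 2 - 1 = n + 1 := rfl
  rw [hrange, hc]
  have hA0pos : 0 < α 0 := lt_of_lt_of_le hβpos hA0
  -- sum over alternatives bound
  have hsumbound : ∀ i : Fin m,
      α i.succ * (((n : ℝ) + 1)⁻¹ *
        ∑ q ∈ Finset.range (n + 1),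
          Jcost f (L i.succ) (F i.succ) (n + 2) (f xk (Up 0)) (shiftA (n + 2) Ua uhat i q))
      ≤ α i.succ * (((n : ℝ) + 1)⁻¹ *
        ∑ q ∈ Finset.range (n + 1),
          Jcost f (L i.succ) (F i.succ) (n + 2) xk (Ua i q)) + α i.succ * P := by
    intro i
    have hs : ∑ q ∈ Finset.range (n + 1),
        Jcost f (L i.succ) (F i.succ) (n + 2) (f xk (Up 0)) (shiftA (n + 2) Ua uhat i q)
        ≤ (∑ q ∈ Finset.range (n + 1),
            Jcost f (L i.succ) (F i.succ) (n + 2) xk (Ua i q)) + ((n : ℝ) + 1) * P := by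
      calc ∑ q ∈ Finset.range (n + 1),
          Jcost f (L i.succ) (F i.succ) (n + 2) (f xk (Up 0)) (shiftA (n + 2) Ua uhat i q)
          ≤ ∑ q ∈ Finset.range (n + 1),
            (Jcost f (L i.succ) (F i.succ) (n + 2) xk (Ua i q) + P) :=
            Finset.sum_le_sum (halt i)
        _ = (∑ q ∈ Finset.range (n + 1),
            Jcost f (L i.succ) (F i.succ) (n + 2) xk (Ua i q)) + ((n : ℝ) + 1) * P := by
            rw [Finset.sum_add_distrib]
            simp only [Finset.sum_const, Finset.card_range, nsmul_eq_mul]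
            push_cast; ring
    have h1 : (((n : ℝ) + 1)⁻¹ *
        ∑ q ∈ Finset.range (n + 1),
          Jcost f (L i.succ) (F i.succ) (n + 2) (f xk (Up 0)) (shiftA (n + 2) Ua uhat i q))
        ≤ ((n : ℝ) + 1)⁻¹ *
          ((∑ q ∈ Finset.range (n + 1),
            Jcost f (L i.succ) (F i.succ) (n + 2) xk (Ua i q)) + ((n : ℝ) + 1) * P) :=
      mul_le_mul_of_nonneg_left hs (inv_nonneg.mpr hcpos.le)
    have h2 : ((n : ℝ) + 1)⁻¹ * (((n : ℝ) + 1) * P) = P := by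
      field_simp
    have h3 := mul_le_mul_of_nonneg_left h1 (hAi i)
    calc α i.succ * (((n : ℝ) + 1)⁻¹ *
          ∑ q ∈ Finset.range (n + 1),
            Jcost f (L i.succ) (F i.succ) (n + 2) (f xk (Up 0)) (shiftA (n + 2) Ua uhat i q))
        ≤ α i.succ * (((n : ℝ) + 1)⁻¹ *
          ((∑ q ∈ Finset.range (n + 1),
            Jcost f (L i.succ) (F i.succ) (n + 2) xk (Ua i q)) + ((n : ℝ) + 1) * P)) := h3
      _ = α i.succ * (((n : ℝ) + 1)⁻¹ *
          ∑ q ∈ Finset.range (n + 1),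
            Jcost f (L i.succ) (F i.succ) (n + 2) xk (Ua i q)) + α i.succ * P := by
          rw [mul_add, mul_add, h2]
  have hsum2 : ∑ i : Fin m, α i.succ * (((n : ℝ) + 1)⁻¹ *
        ∑ q ∈ Finset.range (n + 1),
          Jcost f (L i.succ) (F i.succ) (n + 2) (f xk (Up 0)) (shiftA (n + 2) Ua uhat i q))
      ≤ (∑ i : Fin m, α i.succ * (((n : ℝ) + 1)⁻¹ *
        ∑ q ∈ Finset.range (n + 1),
          Jcost f (L i.succ) (F i.succ) (n + 2) xk (Ua i q))) + (1 - α 0) * P := by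
    calc ∑ i : Fin m, α i.succ * (((n : ℝ) + 1)⁻¹ *
          ∑ q ∈ Finset.range (n + 1),
            Jcost f (L i.succ) (F i.succ) (n + 2) (f xk (Up 0)) (shiftA (n + 2) Ua uhat i q))
        ≤ ∑ i : Fin m, (α i.succ * (((n : ℝ) + 1)⁻¹ *
          ∑ q ∈ Finset.range (n + 1),
            Jcost f (L i.succ) (F i.succ) (n + 2) xk (Ua i q)) + α i.succ * P) :=
          Finset.sum_le_sum fun i _ => hsumbound i
      _ = (∑ i : Fin m, α i.succ * (((n : ℝ) + 1)⁻¹ *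
          ∑ q ∈ Finset.range (n + 1),
            Jcost f (L i.succ) (F i.succ) (n + 2) xk (Ua i q))) + (1 - α 0) * P := by
          rw [Finset.sum_add_distrib, ← Finset.sum_mul, hsumA]
  have hfinal : α 0 * T0 + (1 - α 0) * P ≤ 0 := by
    have h1 : α 0 * T0 ≤ β * T0 := mul_le_mul_of_nonpos_right hA0 hT0neg
    have h2 : (1 - α 0) * P ≤ (1 - β) * P :=
      mul_le_mul_of_nonneg_right (by linarith) hPpos.le
    linarith
  have hp1 : α 0 * Jcost f (L 0) (F 0) (n + 2) (f xk (Up 0))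
      (shiftP (n + 2) Up (matVec K xf))
      ≤ α 0 * Jcost f (L 0) (F 0) (n + 2) xk Up + α 0 * T0 := by
    have := mul_le_mul_of_nonneg_left hprim hA0pos.le
    linarith [this, mul_add (α 0) (Jcost f (L 0) (F 0) (n + 2) xk Up) T0]
  linarith [hp1, hsum2, hfinal]
end
end

section
/- (Theorem 1, strengthened cost-decrease inequality) Under the hypotheses of Theorem 1 (Assumptions 1 and 2, P > 0, parameters δ, γ^i, μ with β > 0 and β·(L^0(x,Kx)+F^0(f(x,Kx))−F^0(x)) ≤ −(1−β)P on 𝕏∖B_δ; x_k ∈ 𝕏∖B_δ; α := α_b(x_k); U_* a feasible multi-horizon input minimizing α⊤𝐉(x_k,·) with primary final state x_{k,f} ∈ 𝕏∖B_δ; x_{k+1} := f(x_k, u*_k); U_s(x_{k+1}) the shifted candidate built with K and û), one has α⊤𝐉(x_{k+1}, U_s(x_{k+1})) − α⊤𝐉(x_k, U_*) ≤ − Σ_{i=0}^m α^i · L^i(x_k, u*_k), where u*_k is the first input of U_*. -/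
noncomputable section

lemma traj_succ_shift {E U : Type*} (f : E → U → E) (x : E) (u v : ℕ → U)
    (n : ℕ) (hv : ∀ k < n, v k = u (k + 1)) :
    traj f (f x (u 0)) v n = traj f x u (n + 1) := by
  induction n with
  | zero => rfl
  | succ j ih =>
    show f (traj f (f x (u 0)) v j) (v j) = f (traj f x u (j + 1)) (u (j + 1))
    rw [ih (fun k hk => hv k (Nat.lt_succ_of_lt hk)), hv j (Nat.lt_succ_self j)]

lemma Jcost_shift {E U : Type*} (f : E → U → E) (L : E → U → ℝ) (F : E → ℝ)
    (M : ℕ) (x : E) (u : ℕ → U) (last : U) :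
    Jcost f L F (M + 1) (f x (u 0)) (shiftP (M + 1) u last)
      = Jcost f L F (M + 1) x u - L x (u 0)
        + (L (traj f x u (M + 1)) last + F (f (traj f x u (M + 1)) last)
            - F (traj f x u (M + 1))) := by
  have hsh : ∀ j < M, shiftP (M + 1) u last j = u (j + 1) := by
    intro j hj
    simp only [shiftP, Nat.add_sub_cancel]
    rw [if_pos hj]
  have hshM : shiftP (M + 1) u last M = last := by
    simp only [shiftP, Nat.add_sub_cancel]
    rw [if_neg (lt_irrefl M)]
  have htr : ∀ j ≤ M, traj f (f x (u 0)) (shiftP (M + 1) u last) j = traj f x u (j + 1) :=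
    fun j hj => traj_succ_shift f x u _ j (fun k hk => hsh k (lt_of_lt_of_le hk hj))
  have htrM1 : traj f (f x (u 0)) (shiftP (M + 1) u last) (M + 1)
      = f (traj f x u (M + 1)) last := by
    show f (traj f (f x (u 0)) (shiftP (M + 1) u last) M) (shiftP (M + 1) u last M) = _
    rw [htr M le_rfl, hshM]
  have h1 : ∑ j ∈ Finset.range (M + 1),
        L (traj f (f x (u 0)) (shiftP (M + 1) u last) j) (shiftP (M + 1) u last j)
      = (∑ j ∈ Finset.range M, L (traj f x u (j + 1)) (u (j + 1)))
        + L (traj f x u (M + 1)) last := by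
    rw [Finset.sum_range_succ, htr M le_rfl, hshM]
    congr 1
    refine Finset.sum_congr rfl fun j hj => ?_
    rw [htr j (Finset.mem_range.mp hj).le, hsh j (Finset.mem_range.mp hj)]
  have h2 : ∑ j ∈ Finset.range (M + 1), L (traj f x u j) (u j)
      = (∑ j ∈ Finset.range M, L (traj f x u (j + 1)) (u (j + 1))) + L x (u 0) := by
    rw [Finset.sum_range_succ' (fun j => L (traj f x u j) (u j)) M]
    rfl
  unfold Jcost
  rw [h1, htrM1, h2]
  ring

/-- Theorem 1, strengthened cost-decrease inequality: under the hypotheses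
of Theorem 1 (Assumptions 1 and 2, `P > 0`, parameters `δ, γ, μ` with `β > 0` and
`β·(L⁰(x,Kx)+F⁰(f(x,Kx))−F⁰(x)) ≤ −(1−β)P` on `𝕏∖B_δ`; `x_k ∈ 𝕏∖B_δ`; `α := α_b(x_k)`;
`U_*` a feasible minimizer of `α⊤𝐉(x_k,·)` with primary final state in `𝕏∖B_δ`;
`x_{k+1} := f(x_k, u*_k)`; `U_s(x_{k+1})` the shifted candidate built with `K` and `û`),
one has `α⊤𝐉(x_{k+1}, U_s(x_{k+1})) − α⊤𝐉(x_k, U_*) ≤ −Σ_{i=0}^m αⁱ·Lⁱ(x_k, u*_k)`. -/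
theorem stmt_7 {nx nu m : ℕ}
    (f : EuclideanSpace ℝ (Fin nx) → EuclideanSpace ℝ (Fin nu) → EuclideanSpace ℝ (Fin nx))
    (hf : Continuous fun q : EuclideanSpace ℝ (Fin nx) × EuclideanSpace ℝ (Fin nu) =>
      f q.1 q.2)
    (Xs : Set (EuclideanSpace ℝ (Fin nx))) (hXc : IsCompact Xs)
    (Us : Set (EuclideanSpace ℝ (Fin nu))) (hUc : IsCompact Us)
    (p : Fin (m + 1) → EuclideanSpace ℝ (Fin nx)) (hp0 : p 0 = 0)
    (L : Fin (m + 1) → EuclideanSpace ℝ (Fin nx) → EuclideanSpace ℝ (Fin nu) → ℝ)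
    (F : Fin (m + 1) → EuclideanSpace ℝ (Fin nx) → ℝ)
    -- Assumption 1
    (hLc : ∀ i, Continuous fun q :
      EuclideanSpace ℝ (Fin nx) × EuclideanSpace ℝ (Fin nu) => L i q.1 q.2)
    (hFc : ∀ i, Continuous (F i))
    (hLp : ∀ i, L i (p i) 0 = 0) (hFp : ∀ i, F i (p i) = 0)
    (σ1 σ2 : ℝ → ℝ) (hσ1 : ClassK σ1) (hσ2 : ClassK σ2)
    (hL_lb : ∀ i, ∀ x ∈ Xs, ∀ u ∈ Us, σ1 ‖x - p i‖ ≤ L i x u)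
    (hF_lb : ∀ i, ∀ x ∈ Xs, σ1 ‖x - p i‖ ≤ F i x)
    (hF_ub : ∀ i, ∀ x ∈ Xs, F i x ≤ σ2 ‖x - p i‖)
    -- Assumption 2 (global form)
    (hA2 : ∀ δ' > (0 : ℝ), Metric.ball (0 : EuclideanSpace ℝ (Fin nx)) δ' ⊆ Xs →
      ∃ K' : Matrix (Fin nu) (Fin nx) ℝ, ∀ x ∈ Xs \ Metric.ball 0 δ',
        L 0 x (matVec K' x) + F 0 (f x (matVec K' x)) - F 0 x < 0)
    -- P = min-max constant, attained at û, with P > 0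
    (P : ℝ) (uhat : EuclideanSpace ℝ (Fin nu))
    (hP : IsLeast {y : ℝ | ∃ u ∈ Us, IsGreatest
        ((fun q : Fin (m + 1) × EuclideanSpace ℝ (Fin nx) =>
            L q.1 q.2 u + F q.1 (f q.2 u) - F q.1 q.2) ''
          ((Set.univ : Set (Fin (m + 1))) ×ˢ Xs)) y} P)
    (huhat : uhat ∈ Us ∧ IsGreatest
        ((fun q : Fin (m + 1) × EuclideanSpace ℝ (Fin nx) =>
            L q.1 q.2 uhat + F q.1 (f q.2 uhat) - F q.1 q.2) ''
          ((Set.univ : Set (Fin (m + 1))) ×ˢ Xs)) P)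
    (hPpos : 0 < P)
    -- parameters δ, γ, μ and the matrix K satisfying Assumption 2 for δ
    (δ : ℝ) (hδ : 0 < δ) (γ : Fin m → ℝ) (hγ : ∀ i, 0 < γ i) (μ : ℝ) (hμ : 0 < μ)
    (hball : Metric.ball (0 : EuclideanSpace ℝ (Fin nx)) δ ⊆ Xs)
    (K : Matrix (Fin nu) (Fin nx) ℝ)
    (hK : ∀ x ∈ Xs \ Metric.ball 0 δ,
      L 0 x (matVec K x) + F 0 (f x (matVec K x)) - F 0 x < 0)
    -- β = min of the primary baseline weight over 𝕏∖B_δ, β > 0, and the key inequality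
    (β : ℝ)
    (hβ : IsLeast ((fun x => baseWeight γ μ p x 0) '' (Xs \ Metric.ball 0 δ)) β)
    (hβpos : 0 < β)
    (hkey : ∀ x ∈ Xs \ Metric.ball 0 δ,
      β * (L 0 x (matVec K x) + F 0 (f x (matVec K x)) - F 0 x) ≤ -(1 - β) * P)
    -- horizon, current state, and the optimizer U_*
    (N : ℕ) (hN : 2 ≤ N)
    (xk : EuclideanSpace ℝ (Fin nx)) (hxk : xk ∈ Xs \ Metric.ball 0 δ)
    (Up : ℕ → EuclideanSpace ℝ (Fin nu))
    (Ua : Fin m → ℕ → ℕ → EuclideanSpace ℝ (Fin nu))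
    (hopt : IsMinimizer f L F Xs Us N (baseWeight γ μ p xk) xk Up Ua)
    (hxkf : traj f xk Up N ∈ Xs \ Metric.ball 0 δ) :
    wcost f L F N (baseWeight γ μ p xk) (f xk (Up 0))
        (shiftP N Up (matVec K (traj f xk Up N))) (shiftA N Ua uhat)
      - wcost f L F N (baseWeight γ μ p xk) xk Up Ua
      ≤ -∑ i : Fin (m + 1), baseWeight γ μ p xk i * L i xk (Up 0) := by
  obtain ⟨M, rfl⟩ : ∃ M, N = M + 2 := ⟨N - 2, by omega⟩
  set α := baseWeight γ μ p xk with hα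
  set u0 := Up 0 with hu0
  set xf := traj f xk Up (M + 2) with hxf
  set E0 : ℝ := L 0 xf (matVec K xf) + F 0 (f xf (matVec K xf)) - F 0 xf with hE0def
  -- basic facts about the weights
  have hα0 : α 0 = 1 - ∑ i : Fin m, γ i * ‖xk‖ / max μ ‖xk - p i.succ‖ := rfl
  have hαsucc : ∀ i : Fin m, α i.succ = γ i * ‖xk‖ / max μ ‖xk - p i.succ‖ := by
    intro i
    simp [hα, baseWeight]
  have hαnn : ∀ i : Fin m, 0 ≤ α i.succ := by
    intro i
    rw [hαsucc i]
    exact div_nonneg (mul_nonneg (hγ i).le (norm_nonneg _))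
      (le_trans hμ.le (le_max_left _ _))
  have hsumα : ∑ i : Fin m, α i.succ = 1 - α 0 := by
    rw [hα0]
    rw [Finset.sum_congr rfl fun i _ => hαsucc i]
    ring
  have hα0β : β ≤ α 0 := hβ.2 ⟨xk, hxk, rfl⟩
  -- the P-bound for uhat
  have hPbd : ∀ (i : Fin (m + 1)), ∀ x ∈ Xs,
      L i x uhat + F i (f x uhat) - F i x ≤ P := by
    intro i x hx
    exact huhat.2.2 ⟨(i, x), ⟨Set.mem_univ i, hx⟩, rfl⟩
  -- the key negativity
  have hE0neg : E0 < 0 := hK xf hxkf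
  have hmain : α 0 * E0 + (1 - α 0) * P ≤ 0 := by
    have h1 : α 0 * E0 ≤ β * E0 := mul_le_mul_of_nonpos_right hα0β hE0neg.le
    have h2 : (1 - α 0) * P ≤ (1 - β) * P :=
      mul_le_mul_of_nonneg_right (by linarith) hPpos.le
    have h3 : β * E0 ≤ -(1 - β) * P := hkey xf hxkf
    linarith
  -- feasibility facts
  obtain ⟨hUpU, hUpX, hUaF, hUaEq⟩ := hopt.1
  -- primary horizon shift
  have hJ0 : Jcost f (L 0) (F 0) (M + 2) (f xk u0) (shiftP (M + 2) Up (matVec K xf))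
      = Jcost f (L 0) (F 0) (M + 2) xk Up - L 0 xk u0 + E0 :=
    Jcost_shift f (L 0) (F 0) (M + 1) xk Up (matVec K xf)
  -- alternative horizons shift, bounded
  have hJa : ∀ (i : Fin m), ∀ p ∈ Finset.range (M + 2 - 1),
      Jcost f (L i.succ) (F i.succ) (M + 2) (f xk u0) (shiftA (M + 2) Ua uhat i p)
        ≤ Jcost f (L i.succ) (F i.succ) (M + 2) xk (Ua i p)
          + (-L i.succ xk u0 + P) := by
    intro i q hq
    have hq' : q < M + 2 - 1 := Finset.mem_range.mp hq
    have h0 : Ua i q 0 = u0 := hUaEq i q hq' 0 (Nat.zero_le _)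
    have hXf : traj f xk (Ua i q) (M + 2) ∈ Xs := (hUaF i q hq').2 (M + 2) le_rfl
    have hshift : Jcost f (L i.succ) (F i.succ) (M + 2) (f xk (Ua i q 0))
          (shiftP (M + 2) (Ua i q) uhat)
        = Jcost f (L i.succ) (F i.succ) (M + 2) xk (Ua i q) - L i.succ xk (Ua i q 0)
          + (L i.succ (traj f xk (Ua i q) (M + 2)) uhat
              + F i.succ (f (traj f xk (Ua i q) (M + 2)) uhat)
              - F i.succ (traj f xk (Ua i q) (M + 2))) :=
      Jcost_shift f (L i.succ) (F i.succ) (M + 1) xk (Ua i q) uhat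
    have hbd := hPbd i.succ (traj f xk (Ua i q) (M + 2)) hXf
    have heq : shiftA (M + 2) Ua uhat i q = shiftP (M + 2) (Ua i q) uhat := rfl
    rw [h0] at hshift
    rw [heq, hshift]
    linarith
  -- sum the alternative bounds
  have hcM : ((M + 2 : ℕ) : ℝ) - 1 = ((M + 1 : ℕ) : ℝ) := by push_cast; ring
  have hSa : ∀ i : Fin m,
      (((M + 2 : ℕ) : ℝ) - 1)⁻¹ * ∑ q ∈ Finset.range (M + 2 - 1),
          Jcost f (L i.succ) (F i.succ) (M + 2) (f xk u0) (shiftA (M + 2) Ua uhat i q)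
        ≤ (((M + 2 : ℕ) : ℝ) - 1)⁻¹ * (∑ q ∈ Finset.range (M + 2 - 1),
            Jcost f (L i.succ) (F i.succ) (M + 2) xk (Ua i q))
          + (-L i.succ xk u0 + P) := by
    intro i
    have hsum := Finset.sum_le_sum (hJa i)
    rw [Finset.sum_add_distrib, Finset.sum_const, Finset.card_range] at hsum
    have hpos : (0 : ℝ) < ((M + 2 : ℕ) : ℝ) - 1 := by
      rw [hcM]; positivity
    rw [← mul_le_mul_iff_right₀ hpos, mul_add, mul_inv_cancel_left₀ hpos.ne',
      mul_inv_cancel_left₀ hpos.ne']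
    calc ∑ q ∈ Finset.range (M + 2 - 1),
          Jcost f (L i.succ) (F i.succ) (M + 2) (f xk u0) (shiftA (M + 2) Ua uhat i q)
        ≤ (∑ q ∈ Finset.range (M + 2 - 1),
            Jcost f (L i.succ) (F i.succ) (M + 2) xk (Ua i q))
          + (M + 2 - 1 : ℕ) • (-L i.succ xk u0 + P) := hsum
      _ = (∑ q ∈ Finset.range (M + 2 - 1),
            Jcost f (L i.succ) (F i.succ) (M + 2) xk (Ua i q))
          + (((M + 2 : ℕ) : ℝ) - 1) * (-L i.succ xk u0 + P) := by
          rw [nsmul_eq_mul, hcM]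
          norm_num
  -- put everything together
  have hwnew : wcost f L F (M + 2) α (f xk u0)
        (shiftP (M + 2) Up (matVec K xf)) (shiftA (M + 2) Ua uhat)
      ≤ α 0 * (Jcost f (L 0) (F 0) (M + 2) xk Up - L 0 xk u0 + E0)
        + ∑ i : Fin m, (α i.succ * ((((M + 2 : ℕ) : ℝ) - 1)⁻¹ *
            ∑ q ∈ Finset.range (M + 2 - 1),
              Jcost f (L i.succ) (F i.succ) (M + 2) xk (Ua i q))
          + α i.succ * (-L i.succ xk u0 + P)) := by
    unfold wcost
    rw [hJ0]
    refine add_le_add (le_refl _) (Finset.sum_le_sum fun i _ => ?_)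
    calc α i.succ * ((((M + 2 : ℕ) : ℝ) - 1)⁻¹ * ∑ q ∈ Finset.range (M + 2 - 1),
            Jcost f (L i.succ) (F i.succ) (M + 2) (f xk u0) (shiftA (M + 2) Ua uhat i q))
        ≤ α i.succ * ((((M + 2 : ℕ) : ℝ) - 1)⁻¹ * (∑ q ∈ Finset.range (M + 2 - 1),
            Jcost f (L i.succ) (F i.succ) (M + 2) xk (Ua i q)) + (-L i.succ xk u0 + P)) :=
          mul_le_mul_of_nonneg_left (hSa i) (hαnn i)
      _ = α i.succ * ((((M + 2 : ℕ) : ℝ) - 1)⁻¹ * ∑ q ∈ Finset.range (M + 2 - 1),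
            Jcost f (L i.succ) (F i.succ) (M + 2) xk (Ua i q))
          + α i.succ * (-L i.succ xk u0 + P) := by ring
  have hfinal : α 0 * (-L 0 xk u0 + E0) + ∑ i : Fin m, α i.succ * (-L i.succ xk u0 + P)
      ≤ -∑ i : Fin (m + 1), α i * L i xk u0 := by
    rw [Fin.sum_univ_succ]
    have hexp : ∑ i : Fin m, α i.succ * (-L i.succ xk u0 + P)
        = -(∑ i : Fin m, α i.succ * L i.succ xk u0) + (∑ i : Fin m, α i.succ) * P := by
      rw [Finset.sum_mul, ← Finset.sum_neg_distrib, ← Finset.sum_add_distrib]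
      exact Finset.sum_congr rfl fun i _ => by ring
    rw [hexp, hsumα]
    have : ∑ i : Fin m, α i.succ * L i.succ xk u0
        = ∑ i : Fin m, α i.succ * L i.succ xk u0 := rfl
    linarith [hmain]
  have hwold : wcost f L F (M + 2) α xk Up Ua
      = α 0 * Jcost f (L 0) (F 0) (M + 2) xk Up
        + ∑ i : Fin m, α i.succ * ((((M + 2 : ℕ) : ℝ) - 1)⁻¹ *
            ∑ q ∈ Finset.range (M + 2 - 1),
              Jcost f (L i.succ) (F i.succ) (M + 2) xk (Ua i q)) := rfl
  have hsplit : ∑ i : Fin m, (α i.succ * ((((M + 2 : ℕ) : ℝ) - 1)⁻¹ *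
          ∑ q ∈ Finset.range (M + 2 - 1),
            Jcost f (L i.succ) (F i.succ) (M + 2) xk (Ua i q))
        + α i.succ * (-L i.succ xk u0 + P))
      = (∑ i : Fin m, α i.succ * ((((M + 2 : ℕ) : ℝ) - 1)⁻¹ *
          ∑ q ∈ Finset.range (M + 2 - 1),
            Jcost f (L i.succ) (F i.succ) (M + 2) xk (Ua i q)))
        + ∑ i : Fin m, α i.succ * (-L i.succ xk u0 + P) :=
    Finset.sum_add_distrib
  have hexpand : α 0 * (Jcost f (L 0) (F 0) (M + 2) xk Up - L 0 xk u0 + E0)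
      = α 0 * Jcost f (L 0) (F 0) (M + 2) xk Up + α 0 * (-L 0 xk u0 + E0) := by ring
  rw [hwold]
  rw [hsplit, hexpand] at hwnew
  nlinarith [hwnew, hfinal]
end
end

section
/- (Theorem 2) Let Assumption 1 hold and suppose P ≤ 0. Let δ > 0 with B_δ ⊆ 𝕏 and let the matrix K satisfy L^0(x, Kx) + F^0(f(x, Kx)) − F^0(x) ≤ 0 for all x ∈ 𝕏. Fix the horizon N ≥ 2, let x_k ∈ 𝕏∖B_δ, and let α = (α^0,…,α^m) be any weight vector with α^i ∈ [0,1] and Σ_{i=0}^m α^i = 1. Let U_* be a feasible multi-horizon input at x_k minimizing α⊤𝐉(x_k, ·) over feasible multi-horizon inputs, u*_k its first input, x_{k+1} := f(x_k, u*_k), and U_s(x_{k+1}) the shifted candidate built from U_* with K and û. Then α⊤𝐉(x_{k+1}, U_s(x_{k+1})) ≤ α⊤𝐉(x_k, U_*). -/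
noncomputable section

lemma traj_succ' {E U : Type*} (f : E → U → E) (x : E) (u : ℕ → U) (j : ℕ) :
    traj f x u (j + 1) = f (traj f x u j) (u j) := rfl

lemma traj_shift {E U : Type*} (f : E → U → E) (x : E) (u v : ℕ → U) (n : ℕ)
    (hv : ∀ j < n, v j = u (j + 1)) :
    ∀ j, j ≤ n → traj f (f x (u 0)) v j = traj f x u (j + 1) := by
  intro j
  induction j with
  | zero => intro _; rfl
  | succ j ih =>
    intro hj
    have hjn : j < n := by omega
    rw [traj_succ', ih hjn.le, hv j hjn]; rfl

lemma shift_le {E U : Type*} (f : E → U → E) (L : E → U → ℝ) (F : E → ℝ) (n : ℕ)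
    (x : E) (u v : ℕ → U) (last : U)
    (hv : ∀ j < n, v j = u (j + 1)) (hvn : v n = last)
    (hL0 : 0 ≤ L x (u 0))
    (hterm : L (traj f x u (n + 1)) last + F (f (traj f x u (n + 1)) last)
        - F (traj f x u (n + 1)) ≤ 0) :
    Jcost f L F (n + 1) (f x (u 0)) v ≤ Jcost f L F (n + 1) x u := by
  have htr := traj_shift f x u v n hv
  unfold Jcost
  rw [Finset.sum_range_succ, Finset.sum_range_succ' (fun j => L (traj f x u j) (u j)) n]
  have hsum : ∑ j ∈ Finset.range n, L (traj f (f x (u 0)) v j) (v j)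
      = ∑ j ∈ Finset.range n, L (traj f x u (j + 1)) (u (j + 1)) := by
    apply Finset.sum_congr rfl
    intro j hj
    rw [htr j (Finset.mem_range.mp hj).le, hv j (Finset.mem_range.mp hj)]
  have hlast : traj f (f x (u 0)) v (n + 1) = f (traj f x u (n + 1)) last := by
    rw [traj_succ', htr n le_rfl, hvn]
  have h0 : traj f x u 0 = x := rfl
  rw [hsum, htr n le_rfl, hvn, hlast, h0]
  linarith

/-- Theorem 2: let Assumption 1 hold and suppose `P ≤ 0`.  Let `δ > 0` with
`B_δ ⊆ 𝕏` and let `K` satisfy `L⁰(x,Kx)+F⁰(f(x,Kx))−F⁰(x) ≤ 0` for all `x ∈ 𝕏`.  For any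
`x_k ∈ 𝕏∖B_δ`, any weight vector `α` with `αⁱ ∈ [0,1]` and `Σ αⁱ = 1`, and `U_*` a feasible
minimizer of `α⊤𝐉(x_k,·)`, the shifted candidate `U_s(x_{k+1})` built with `K` and `û`
satisfies `α⊤𝐉(x_{k+1}, U_s(x_{k+1})) ≤ α⊤𝐉(x_k, U_*)`, where `x_{k+1} = f(x_k, u*_k)`. -/
theorem stmt_8 {nx nu m : ℕ}
    (f : EuclideanSpace ℝ (Fin nx) → EuclideanSpace ℝ (Fin nu) → EuclideanSpace ℝ (Fin nx))
    (hf : Continuous fun q : EuclideanSpace ℝ (Fin nx) × EuclideanSpace ℝ (Fin nu) =>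
      f q.1 q.2)
    (Xs : Set (EuclideanSpace ℝ (Fin nx))) (hXc : IsCompact Xs)
    (Us : Set (EuclideanSpace ℝ (Fin nu))) (hUc : IsCompact Us)
    (p : Fin (m + 1) → EuclideanSpace ℝ (Fin nx)) (hp0 : p 0 = 0)
    (L : Fin (m + 1) → EuclideanSpace ℝ (Fin nx) → EuclideanSpace ℝ (Fin nu) → ℝ)
    (F : Fin (m + 1) → EuclideanSpace ℝ (Fin nx) → ℝ)
    -- Assumption 1
    (hLc : ∀ i, Continuous fun q :
      EuclideanSpace ℝ (Fin nx) × EuclideanSpace ℝ (Fin nu) => L i q.1 q.2)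
    (hFc : ∀ i, Continuous (F i))
    (hLp : ∀ i, L i (p i) 0 = 0) (hFp : ∀ i, F i (p i) = 0)
    (σ1 σ2 : ℝ → ℝ) (hσ1 : ClassK σ1) (hσ2 : ClassK σ2)
    (hL_lb : ∀ i, ∀ x ∈ Xs, ∀ u ∈ Us, σ1 ‖x - p i‖ ≤ L i x u)
    (hF_lb : ∀ i, ∀ x ∈ Xs, σ1 ‖x - p i‖ ≤ F i x)
    (hF_ub : ∀ i, ∀ x ∈ Xs, F i x ≤ σ2 ‖x - p i‖)
    -- P = min-max constant, attained at û, with P ≤ 0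
    (P : ℝ) (uhat : EuclideanSpace ℝ (Fin nu))
    (hP : IsLeast {y : ℝ | ∃ u ∈ Us, IsGreatest
        ((fun q : Fin (m + 1) × EuclideanSpace ℝ (Fin nx) =>
            L q.1 q.2 u + F q.1 (f q.2 u) - F q.1 q.2) ''
          ((Set.univ : Set (Fin (m + 1))) ×ˢ Xs)) y} P)
    (huhat : uhat ∈ Us ∧ IsGreatest
        ((fun q : Fin (m + 1) × EuclideanSpace ℝ (Fin nx) =>
            L q.1 q.2 uhat + F q.1 (f q.2 uhat) - F q.1 q.2) ''
          ((Set.univ : Set (Fin (m + 1))) ×ˢ Xs)) P)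
    (hPnonpos : P ≤ 0)
    -- δ and the matrix K
    (δ : ℝ) (hδ : 0 < δ)
    (hball : Metric.ball (0 : EuclideanSpace ℝ (Fin nx)) δ ⊆ Xs)
    (K : Matrix (Fin nu) (Fin nx) ℝ)
    (hK : ∀ x ∈ Xs,
      L 0 x (matVec K x) + F 0 (f x (matVec K x)) - F 0 x ≤ 0)
    -- horizon, current state, weight vector, and the optimizer U_*
    (N : ℕ) (hN : 2 ≤ N)
    (xk : EuclideanSpace ℝ (Fin nx)) (hxk : xk ∈ Xs \ Metric.ball 0 δ)
    (α : Fin (m + 1) → ℝ) (hα : ∀ i, α i ∈ Set.Icc (0 : ℝ) 1) (hαsum : ∑ i, α i = 1)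
    (Up : ℕ → EuclideanSpace ℝ (Fin nu))
    (Ua : Fin m → ℕ → ℕ → EuclideanSpace ℝ (Fin nu))
    (hopt : IsMinimizer f L F Xs Us N α xk Up Ua) :
    wcost f L F N α (f xk (Up 0))
        (shiftP N Up (matVec K (traj f xk Up N))) (shiftA N Ua uhat)
      ≤ wcost f L F N α xk Up Ua := by
  obtain ⟨⟨hUpU, hUpX, hUaFeas, hshare⟩, -⟩ := hopt
  obtain ⟨n, rfl⟩ : ∃ n, N = n + 1 := ⟨N - 1, by omega⟩
  have hn1 : 1 ≤ n := by omega
  have hσnn : ∀ r : ℝ, 0 ≤ r → 0 ≤ σ1 r := by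
    intro r hr
    have := hσ1.2.1.monotoneOn (Set.mem_Ici.mpr le_rfl) (Set.mem_Ici.mpr hr) hr
    rw [hσ1.2.2] at this; exact this
  have hLnn : ∀ i, ∀ x ∈ Xs, ∀ u ∈ Us, 0 ≤ L i x u := fun i x hx u hu =>
    le_trans (hσnn _ (norm_nonneg _)) (hL_lb i x hx u hu)
  have hxkX : xk ∈ Xs := hxk.1
  have hprim : Jcost f (L 0) (F 0) (n + 1) (f xk (Up 0))
      (shiftP (n + 1) Up (matVec K (traj f xk Up (n + 1))))
      ≤ Jcost f (L 0) (F 0) (n + 1) xk Up := by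
    apply shift_le
    · intro j hj
      simp only [shiftP, Nat.add_sub_cancel]
      rw [if_pos hj]
    · simp only [shiftP, Nat.add_sub_cancel]
      rw [if_neg (lt_irrefl n)]
    · exact hLnn 0 xk hxkX (Up 0) (hUpU 0 (by omega))
    · exact hK _ (hUpX (n + 1) le_rfl)
  have halt : ∀ i : Fin m, ∀ p < n,
      Jcost f (L i.succ) (F i.succ) (n + 1) (f xk (Up 0)) (shiftA (n + 1) Ua uhat i p)
        ≤ Jcost f (L i.succ) (F i.succ) (n + 1) xk (Ua i p) := by
    intro i p hp
    have hp' : p < n + 1 - 1 := by omega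
    have h0 : Ua i p 0 = Up 0 := hshare i p hp' 0 (Nat.zero_le p)
    rw [← h0]
    apply shift_le
    · intro j hj
      simp only [shiftA, Nat.add_sub_cancel]
      rw [if_pos hj]
    · simp only [shiftA, Nat.add_sub_cancel]
      rw [if_neg (lt_irrefl n)]
    · exact hLnn i.succ xk hxkX _ ((hUaFeas i p hp').1 0 (by omega))
    · have hxN : traj f xk (Ua i p) (n + 1) ∈ Xs := (hUaFeas i p hp').2 (n + 1) le_rfl
      have hmem : ((i.succ, traj f xk (Ua i p) (n + 1)) :
          Fin (m + 1) × EuclideanSpace ℝ (Fin nx)) ∈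
          (Set.univ : Set (Fin (m + 1))) ×ˢ Xs := ⟨Set.mem_univ _, hxN⟩
      have hle := huhat.2.2 (Set.mem_image_of_mem _ hmem)
      simp only at hle
      linarith
  unfold wcost
  apply add_le_add
  · exact mul_le_mul_of_nonneg_left hprim (hα 0).1
  · apply Finset.sum_le_sum
    intro i _
    apply mul_le_mul_of_nonneg_left _ (hα i.succ).1
    have hc : (0 : ℝ) ≤ (((n : ℝ) + 1) - 1)⁻¹ := by
      apply inv_nonneg.mpr; linarith [Nat.cast_nonneg (α := ℝ) n]
    apply mul_le_mul_of_nonneg_left _ (by push_cast; exact hc)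
    apply Finset.sum_le_sum
    intro q hq
    exact halt i q (by simpa using Finset.mem_range.mp hq)
end
end
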